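/- arXiv:1808.09226 — 2 statements merged into one kernel-verified Lean document; each statement's English description precedes it below -/
import Mathlib

section
/- (Lemma 5: lower bound via arborescence) Let T be a spanning arborescence of G rooted at c, where edges (x,y) of G satisfy min(U(x), ω°(x,y)+W) ≥ U(y), and let ζ be a vote with ζ(x) > ζ(y) whenever (x,y) ∈ E(T) or U(x) > U(y). Let ω•(x,y) = ω°(x,y) + W if ζ(x) > ζ(y) and ω°(x,y) − W otherwise. Then S[ω•](c,x) ≥ U(x) for all x ≠ c. -/
open scoped Classical

namespace Schulze

def pstr {X : Type} (ω : X → X → WithTop ℤ) : List X → WithTop ℤ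
  | a :: b :: l => min (ω a b) (pstr ω (b :: l))
  | _ => ⊤

def IsPath {X : Type} (x y : X) (p : List X) : Prop :=
  p.Nodup ∧ p.head? = some x ∧ p.getLast? = some y

noncomputable def S {X : Type} [Fintype X] [DecidableEq X]
    (ω : X → X → WithTop ℤ) (x y : X) : WithBot (WithTop ℤ) :=
  (Finset.univ.filter (fun p : {l : List X // l.Nodup} => IsPath x y p.1)).sup
    (fun p => ((pstr ω p.1 : WithTop ℤ) : WithBot (WithTop ℤ)))

def ofInt {X : Type} (ω : X → X → ℤ) : X → X → WithTop ℤ := fun x y => (ω x y : ℤ)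


lemma pstr_append {X : Type} (ω : X → X → WithTop ℤ) :
    ∀ (l : List X) (a x : X),
      pstr ω (a :: l ++ [x]) = min (pstr ω (a :: l)) (ω ((a :: l).getLast (by simp)) x)
  | [], a, x => by simp [pstr]
  | b :: l, a, x => by
    have h := pstr_append ω l b x
    simp only [List.cons_append] at h ⊢
    show min (ω a b) (pstr ω (b :: (l ++ [x]))) = _
    rw [h, ← min_assoc]
    rfl

theorem stmt12 {X : Type} [Fintype X] [DecidableEq X]
    (ωo : X → X → ℤ) (W : ℤ) (hW : 0 ≤ W) (c : X)
    (U : X → WithTop ℤ) (hUc : U c = ⊤)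
    (parent : X → X)
    (hedge : ∀ x : X, x ≠ c → parent x ≠ x ∧
      U x ≤ min (U (parent x)) (((ωo (parent x) x + W : ℤ) : WithTop ℤ)))
    (harb : ∀ x : X, ∃ n : ℕ, parent^[n] x = c)
    (ζ : X ≃ Fin (Fintype.card X))
    (hζ : ∀ x y : X, ((y ≠ c ∧ parent y = x) ∨ U y < U x) → (ζ y : ℕ) < (ζ x : ℕ)) :
    ∀ x : X, x ≠ c →
      ((U x : WithBot (WithTop ℤ)))
        ≤ S (ofInt (fun a b => if (ζ b : ℕ) < (ζ a : ℕ) then ωo a b + W else ωo a b - W)) c x := by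
  intro x hx
  set ω : X → X → WithTop ℤ :=
    ofInt (fun a b => if (ζ b : ℕ) < (ζ a : ℕ) then ωo a b + W else ωo a b - W) with hω
  have key : ∀ n : ℕ, ∀ x : X, x ≠ c → Fintype.card X - (ζ x : ℕ) ≤ n →
      ∃ l : List X, ∃ hnd : l.Nodup, IsPath c x l ∧
        ((U x) ≤ pstr ω l) ∧ ∀ y ∈ l, (ζ x : ℕ) ≤ (ζ y : ℕ) := by
    intro n
    induction n with
    | zero =>
      intro x hx hn
      exact absurd hn (by have := (ζ x).isLt; omega)
    | succ n ih =>
      intro x hx hn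
      obtain ⟨hpx, hUle⟩ := hedge x hx
      have hζx : (ζ x : ℕ) < (ζ (parent x) : ℕ) := hζ (parent x) x (Or.inl ⟨hx, rfl⟩)
      have hωpx : ω (parent x) x = ((ωo (parent x) x + W : ℤ) : WithTop ℤ) := by
        simp only [hω, ofInt]
        rw [if_pos hζx]
      by_cases hpc : parent x = c
      · refine ⟨[c, x], by simp [Ne.symm hx], ⟨by simp [Ne.symm hx], by simp [IsPath], by simp⟩,
          ?_, ?_⟩
        · have : pstr ω [c, x] = ω c x := by simp [pstr]
          rw [this, ← hpc, hωpx]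
          exact hUle.trans (min_le_right _ _)
        · intro y hy
          simp only [List.mem_cons, List.mem_singleton, List.not_mem_nil, or_false] at hy
          rcases hy with rfl | rfl
          · rw [← hpc]; omega
          · exact le_refl _
      · have hbound : Fintype.card X - (ζ (parent x) : ℕ) ≤ n := by
          have := (ζ (parent x)).isLt
          omega
        obtain ⟨l, hnd, ⟨_, hhead, hlast⟩, hple, hall⟩ := ih (parent x) hpc hbound
        obtain ⟨a, t, rfl⟩ : ∃ a t, l = a :: t := by
          cases l with
          | nil => simp at hhead
          | cons a t => exact ⟨a, t, rfl⟩
        have ha : a = c := by simpa using hhead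
        have hlastp : (a :: t).getLast (by simp) = parent x := by
          have := List.getLast?_eq_getLast (by simp : (a :: t) ≠ [])
          rw [this] at hlast
          exact Option.some_injective _ hlast
        have hxl : x ∉ a :: t := by
          intro hmem
          have := hall x hmem
          omega
        have hnd2 : ((a :: t) ++ [x]).Nodup := by
          refine List.Nodup.append hnd (List.nodup_singleton x) ?_
          intro y hy hy2
          simp only [List.mem_singleton] at hy2
          subst hy2; exact hxl hy
        refine ⟨(a :: t) ++ [x], hnd2, ⟨hnd2, ?_, ?_⟩, ?_, ?_⟩
        · simp [ha]
        · exact List.getLast?_concat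
        · rw [pstr_append, hlastp, hωpx]
          refine le_min ?_ (hUle.trans (min_le_right _ _))
          exact le_trans (hUle.trans (min_le_left _ _)) hple
        · intro y hy
          simp only [List.mem_append, List.mem_singleton] at hy
          rcases hy with hy | rfl
          · have := hall y hy; omega
          · exact le_refl _
  obtain ⟨l, hnd, hpath, hle, -⟩ := key (Fintype.card X) x hx (Nat.sub_le _ _)
  have hmem : (⟨l, hnd⟩ : {l : List X // l.Nodup}) ∈
      Finset.univ.filter (fun p : {l : List X // l.Nodup} => IsPath c x p.1) := by
    simp [hpath]
  calc ((U x : WithBot (WithTop ℤ))) ≤ ((pstr ω l : WithTop ℤ) : WithBot (WithTop ℤ)) :=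
        WithBot.coe_le_coe.mpr hle
    _ ≤ _ := Finset.le_sup (f := fun p => ((pstr ω p.1 : WithTop ℤ) : WithBot (WithTop ℤ))) hmem


end Schulze
end

section
/- (Necessity) Let U be the output of Algorithm 1 (closed under Rules 1 and 2, starting from U(c) = ∞, U(x) = max edge weight + W otherwise). If there exist manipulator votes making c the unique Schulze winner of the combined profile, then U(x) > ω°(x,c) − W for all x ≠ c. -/
open scoped Classical

namespace Schulze

variable {X : Type}

@[simp] lemma pstr_nil (ω : X → X → WithTop ℤ) : pstr ω ([] : List X) = ⊤ := rfl

@[simp] lemma pstr_single (ω : X → X → WithTop ℤ) (a : X) : pstr ω [a] = ⊤ := rfl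

lemma pstr_cons_cons (ω : X → X → WithTop ℤ) (a b : X) (l : List X) :
    pstr ω (a :: b :: l) = min (ω a b) (pstr ω (b :: l)) := rfl

lemma pstr_le_head (ω : X → X → WithTop ℤ) (a b : X) (l : List X) :
    pstr ω (a :: b :: l) ≤ ω a b := by
  rw [pstr_cons_cons]; exact min_le_left _ _

lemma pstr_cons_le (ω : X → X → WithTop ℤ) (a b : X) (l : List X) :
    pstr ω (a :: b :: l) ≤ pstr ω (b :: l) := by
  rw [pstr_cons_cons]; exact min_le_right _ _

lemma pstr_pair (ω : X → X → WithTop ℤ) (a b : X) :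
    pstr ω [a, b] = ω a b := by
  rw [pstr_cons_cons, pstr_single]; exact min_eq_left le_top

lemma pstr_append_le (ω : X → X → WithTop ℤ) :
    ∀ (l₁ l₂ : List X), l₂ ≠ [] → pstr ω (l₁ ++ l₂) ≤ pstr ω l₂ := by
  intro l₁
  induction l₁ with
  | nil => intro l₂ _; simp
  | cons a l₁ ih =>
    intro l₂ h2
    have hne : l₁ ++ l₂ ≠ [] := by simp [h2]
    obtain ⟨b, t, hbt⟩ := List.exists_cons_of_ne_nil hne
    calc pstr ω (a :: l₁ ++ l₂) = pstr ω (a :: (l₁ ++ l₂)) := by simp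
      _ ≤ pstr ω (l₁ ++ l₂) := by rw [hbt]; exact pstr_cons_le ω a b t
      _ ≤ pstr ω l₂ := ih l₂ h2

lemma lt_pstr_of_splits (ω : X → X → WithTop ℤ) (s : WithTop ℤ) (hs : s ≠ ⊤) (p : List X)
    (h : ∀ l₁ a b l₂, p = l₁ ++ a :: b :: l₂ → s < ω a b) : s < pstr ω p := by
  suffices H : ∀ l₂ : List X, (∃ l₁, p = l₁ ++ l₂) → s < pstr ω l₂ by
    exact H p ⟨[], rfl⟩
  intro l₂
  induction l₂ with
  | nil => intro _; rw [pstr_nil]; exact lt_top_iff_ne_top.2 hs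
  | cons a rest ih =>
    intro ⟨l₁, hl₁⟩
    cases rest with
    | nil => rw [pstr_single]; exact lt_top_iff_ne_top.2 hs
    | cons b l =>
      rw [pstr_cons_cons]
      exact lt_min (h l₁ a b l hl₁) (ih ⟨l₁ ++ [a], by simpa using hl₁⟩)

variable [Fintype X] [DecidableEq X]

lemma le_S (ω : X → X → WithTop ℤ) {x y : X} {p : List X} (hn : p.Nodup) (hp : IsPath x y p) :
    ((pstr ω p : WithTop ℤ) : WithBot (WithTop ℤ)) ≤ S ω x y := by
  have : (⟨p, hn⟩ : {l : List X // l.Nodup}) ∈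
      (Finset.univ.filter (fun p : {l : List X // l.Nodup} => IsPath x y p.1)) := by
    simp [hp]
  exact Finset.le_sup (f := fun p : {l : List X // l.Nodup} => ((pstr ω p.1 : WithTop ℤ) : WithBot (WithTop ℤ))) this

lemma S_le {ω : X → X → WithTop ℤ} {x y : X} {v : WithBot (WithTop ℤ)}
    (hv : ∀ p : List X, p.Nodup → IsPath x y p → ((pstr ω p : WithTop ℤ) : WithBot (WithTop ℤ)) ≤ v) :
    S ω x y ≤ v :=
  Finset.sup_le (fun q hq => hv q.1 q.2 (by simpa using hq))

lemma exists_of_lt_S {ω : X → X → WithTop ℤ} {x y : X} {v : WithBot (WithTop ℤ)}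
    (h : v < S ω x y) :
    ∃ p : List X, p.Nodup ∧ IsPath x y p ∧ v < ((pstr ω p : WithTop ℤ) : WithBot (WithTop ℤ)) := by
  by_contra hc
  push_neg at hc
  exact absurd (S_le (fun p hn hp => hc p hn hp)) (not_le.2 h)

lemma S_attained {ω : X → X → WithTop ℤ} {x y : X} {p₀ : List X} (hn₀ : p₀.Nodup)
    (hp₀ : IsPath x y p₀) :
    ∃ p : List X, p.Nodup ∧ IsPath x y p ∧ S ω x y = ((pstr ω p : WithTop ℤ) : WithBot (WithTop ℤ)) := by
  have hne : (Finset.univ.filter (fun p : {l : List X // l.Nodup} => IsPath x y p.1)).Nonempty :=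
    ⟨⟨p₀, hn₀⟩, by simp [hp₀]⟩
  obtain ⟨q, hq, hsup⟩ := Finset.exists_mem_eq_sup _ hne
    (fun p : {l : List X // l.Nodup} => ((pstr ω p.1 : WithTop ℤ) : WithBot (WithTop ℤ)))
  exact ⟨q.1, q.2, by simpa using hq, hsup⟩

lemma getLast?_suffix {l₁ l₂ : List X} (h2 : l₂ ≠ []) :
    (l₁ ++ l₂).getLast? = l₂.getLast? := by
  rw [List.getLast?_append]
  obtain ⟨b, t, rfl⟩ := List.exists_cons_of_ne_nil h2
  cases h : (b :: t).getLast? with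
  | none => simp at h
  | some z => simp [h]

lemma suffix_path (ω : X → X → WithTop ℤ) {r : List X} {a c b : X}
    (hn : r.Nodup) (hp : IsPath a c r) (hb : b ∈ r) :
    ∃ r', r'.Nodup ∧ IsPath b c r' ∧ pstr ω r ≤ pstr ω r' := by
  obtain ⟨l₁, l₂, rfl⟩ := List.append_of_mem hb
  refine ⟨b :: l₂, (List.sublist_append_right l₁ (b :: l₂)).nodup hn, ⟨(List.sublist_append_right l₁ (b :: l₂)).nodup hn, rfl, ?_⟩, pstr_append_le ω l₁ (b :: l₂) (by simp)⟩
  rw [← getLast?_suffix (l₁ := l₁) (by simp : (b :: l₂) ≠ [])]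
  exact hp.2.2

lemma splice (ω : X → X → WithTop ℤ) :
    ∀ (p : List X) {b x c : X} (q : List X), p.Nodup → IsPath b x p → q.Nodup → IsPath x c q →
    ∃ r, r.Nodup ∧ IsPath b c r ∧ min (pstr ω p) (pstr ω q) ≤ pstr ω r := by
  intro p
  induction p with
  | nil => intro b x c q _ hp; exact absurd hp.2.1 (by simp)
  | cons b₀ rest ih =>
    intro b x c q hn hp hqn hq
    have hb : b₀ = b := by simpa using hp.2.1
    subst hb
    cases rest with
    | nil =>
      have hx : b₀ = x := by simpa using hp.2.2
      subst hx
      exact ⟨q, hqn, hq, min_le_right _ _⟩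
    | cons b₂ l =>
      have hp₂ : IsPath b₂ x (b₂ :: l) := by
        refine ⟨hn.of_cons, rfl, ?_⟩
        rw [← List.getLast?_cons_cons]
        exact hp.2.2
      obtain ⟨r', hr'n, hr'p, hr'⟩ := ih q hn.of_cons hp₂ hqn hq
      by_cases hbr : b₀ ∈ r'
      · obtain ⟨r'', hr''n, hr''p, hr''⟩ := suffix_path ω hr'n hr'p hbr
        refine ⟨r'', hr''n, hr''p, ?_⟩
        calc min (pstr ω (b₀ :: b₂ :: l)) (pstr ω q)
            ≤ min (pstr ω (b₂ :: l)) (pstr ω q) :=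
              min_le_min (pstr_cons_le ω b₀ b₂ l) le_rfl
          _ ≤ pstr ω r' := hr'
          _ ≤ pstr ω r'' := hr''
      · obtain ⟨b₂', t, rfl⟩ : ∃ h t, r' = h :: t := by
          cases r' with
          | nil => exact absurd hr'p.2.1 (by simp)
          | cons h t => exact ⟨h, t, rfl⟩
        have hb₂ : b₂' = b₂ := by simpa using hr'p.2.1
        subst hb₂
        refine ⟨b₀ :: b₂' :: t, List.nodup_cons.2 ⟨hbr, hr'n⟩, ⟨List.nodup_cons.2 ⟨hbr, hr'n⟩, rfl, by rw [List.getLast?_cons_cons]; exact hr'p.2.2⟩, ?_⟩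
        rw [pstr_cons_cons]
        refine le_min ?_ ?_
        · exact le_trans (min_le_left _ _) (pstr_le_head ω b₀ b₂' l)
        · calc min (pstr ω (b₀ :: b₂' :: l)) (pstr ω q)
              ≤ min (pstr ω (b₂' :: l)) (pstr ω q) :=
                min_le_min (pstr_cons_le ω b₀ b₂' l) le_rfl
            _ ≤ pstr ω (b₂' :: t) := hr'

lemma path_pair {x y : X} (h : x ≠ y) : IsPath x y [x, y] :=
  ⟨by simp [h], rfl, rfl⟩

lemma path_two {x y : X} (h : x ≠ y) {p : List X} (hp : IsPath x y p) :
    ∃ a b l, p = a :: b :: l := by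
  cases p with
  | nil => exact absurd hp.2.1 (by simp)
  | cons a rest =>
    cases rest with
    | nil =>
      exfalso
      have h1 : a = x := by simpa using hp.2.1
      have h2 : a = y := by simpa using hp.2.2
      exact h (h1 ▸ h2 ▸ rfl)
    | cons b l => exact ⟨a, b, l, rfl⟩


theorem stmt15 {X M : Type} [Fintype X] [Fintype M] [DecidableEq X]
    (ωo : X → X → ℤ) (hskew : ∀ x y : X, x ≠ y → ωo x y = - ωo y x)
    (w : M → ℕ) (hw : ∀ i, 0 < w i) (W : ℤ) (hWdef : W = ∑ i : M, (w i : ℤ))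
    (c : X)
    -- manipulator votes making c the unique Schulze winner of the combined profile
    (π : M → (X ≃ Fin (Fintype.card X)))
    (ω : X → X → ℤ)
    (hωdef : ∀ x y : X, x ≠ y → ω x y = ωo x y +
      ∑ i : M, (if (π i y : ℕ) < (π i x : ℕ) then (w i : ℤ) else -(w i : ℤ)))
    (hwin : ∀ y : X, y ≠ c → S (ofInt ω) y c < S (ofInt ω) c y)
    -- a run of Algorithm 1
    (Us : ℕ → X → WithTop ℤ) (N : ℕ) (U : X → WithTop ℤ) (hU : U = Us N)
    (h0c : Us 0 c = ⊤)
    (h0 : ∀ x : X, x ≠ c →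
      (∃ y z : X, y ≠ z ∧ Us 0 x = ((ωo y z + W : ℤ) : WithTop ℤ)) ∧
      (∀ y z : X, y ≠ z → ((ωo y z + W : ℤ) : WithTop ℤ) ≤ Us 0 x))
    (hstep : ∀ t, t < N → ∃ x : X, x ≠ c ∧
      (∀ z : X, z ≠ x → Us (t + 1) z = Us t z) ∧
      ((S (fun y z => min (((ωo y z + W : ℤ) : WithTop ℤ)) (Us t z)) c x
          < ((Us t x : WithBot (WithTop ℤ))) ∧
        ((Us (t + 1) x : WithBot (WithTop ℤ)))
          = S (fun y z => min (((ωo y z + W : ℤ) : WithTop ℤ)) (Us t z)) c x)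
       ∨ (∃ y : X, y ≠ c ∧ Us t y < Us t x ∧
            Us t y ≤ ((ωo y x - W : ℤ) : WithTop ℤ) ∧
            Us (t + 1) x = Us t y)))
    -- U is closed under Rules 1 and 2
    (hR1 : ∀ x : X, x ≠ c →
      ((U x : WithBot (WithTop ℤ)))
        ≤ S (fun y z => min (((ωo y z + W : ℤ) : WithTop ℤ)) (U z)) c x)
    (hR2 : ¬ ∃ x y : X, x ≠ c ∧ y ≠ c ∧ U y < U x ∧ U y ≤ ((ωo y x - W : ℤ) : WithTop ℤ)) :
    ∀ x : X, x ≠ c → ((ωo x c - W : ℤ) : WithTop ℤ) < U x := by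
  -- bounds on the manipulated weights
  have hbound : ∀ a b : X, a ≠ b → (ωo a b - W ≤ ω a b ∧ ω a b ≤ ωo a b + W) := by
    intro a b hab
    rw [hωdef a b hab, hWdef]
    have h1 : ∑ i : M, (if (π i b : ℕ) < (π i a : ℕ) then (w i : ℤ) else -(w i : ℤ))
        ≤ ∑ i : M, (w i : ℤ) := by
      refine Finset.sum_le_sum fun i _ => ?_
      split
      · exact le_rfl
      · have : (0 : ℤ) ≤ (w i : ℤ) := Int.natCast_nonneg _
        linarith
    have h2 : ∑ i : M, (-(w i : ℤ))
        ≤ ∑ i : M, (if (π i b : ℕ) < (π i a : ℕ) then (w i : ℤ) else -(w i : ℤ)) := by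
      refine Finset.sum_le_sum fun i _ => ?_
      split
      · have : (0 : ℤ) ≤ (w i : ℤ) := Int.natCast_nonneg _
        linarith
      · exact le_rfl
    rw [Finset.sum_neg_distrib] at h2
    constructor <;> linarith
  -- the invariant
  have key : ∀ t, t ≤ N → ∀ x : X, x ≠ c →
      S (ofInt ω) x c < ((Us t x : WithBot (WithTop ℤ))) := by
    intro t
    induction t with
    | zero =>
      intro _ x hx
      refine lt_of_lt_of_le (hwin x hx) (S_le ?_)
      intro p hn hp
      obtain ⟨a, b, l, rfl⟩ := path_two (Ne.symm hx) hp
      have hab : a ≠ b := by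
        intro h
        exact (List.nodup_cons.1 hn).1 (h ▸ List.mem_cons_self (a := b) (l := l))
      calc ((pstr (ofInt ω) (a :: b :: l) : WithTop ℤ) : WithBot (WithTop ℤ))
          ≤ ((ofInt ω a b : WithTop ℤ) : WithBot (WithTop ℤ)) :=
            WithBot.coe_le_coe.2 (pstr_le_head _ a b l)
        _ ≤ ((((ωo a b + W : ℤ) : WithTop ℤ)) : WithBot (WithTop ℤ)) := by
            exact WithBot.coe_le_coe.2 (by simp only [ofInt]; exact_mod_cast (hbound a b hab).2)
        _ ≤ ((Us 0 x : WithBot (WithTop ℤ))) :=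
            WithBot.coe_le_coe.2 ((h0 x hx).2 a b hab)
    | succ t ih =>
      intro ht x hx
      have htN : t < N := lt_of_lt_of_le (Nat.lt_succ_self t) ht
      have iht := ih (le_of_lt htN)
      obtain ⟨x₀, hx₀c, hother, hrule⟩ := hstep t htN
      rcases eq_or_ne x x₀ with rfl | hxx
      swap
      · rw [hother x hxx]; exact iht x hx
      -- attainment for S x c
      obtain ⟨q, hqn, hqp, hSq⟩ := S_attained (ω := ofInt ω)
        (by simp [hx] : ([x, c] : List X).Nodup) (path_pair hx)
      set sq := pstr (ofInt ω) q with hsqdef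
      have hsqt : sq ≠ ⊤ := by
        obtain ⟨a, b, l, hq2⟩ := path_two hx hqp
        have hab : a ≠ b := by
          intro h
          have hn2 : (a :: b :: l).Nodup := hq2 ▸ hqn
          exact (List.nodup_cons.1 hn2).1 (h ▸ List.mem_cons_self (a := b) (l := l))
        have hle : sq ≤ ofInt ω a b := by rw [hsqdef, hq2]; exact pstr_le_head _ a b l
        exact (lt_of_le_of_lt hle (WithTop.coe_lt_top _)).ne
      rw [hSq]
      rcases hrule with ⟨hlt, heq⟩ | ⟨y, hyc, hylt, hyle, heq⟩
      · -- Rule 1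
        rw [heq]
        have h1 : ((sq : WithTop ℤ) : WithBot (WithTop ℤ)) < S (ofInt ω) c x := hSq ▸ hwin x hx
        obtain ⟨p, hpn, hpp, hplt⟩ := exists_of_lt_S h1
        refine lt_of_lt_of_le ?_ (le_S _ hpn hpp)
        rw [WithBot.coe_lt_coe] at hplt ⊢
        refine lt_pstr_of_splits _ sq hsqt p ?_
        intro l₁ a b l₂ hsplit
        have hform : p = (l₁ ++ [a]) ++ b :: l₂ := by simp [hsplit]
        have hsub : (a :: b :: l₂).Sublist p := hsplit ▸ List.sublist_append_right l₁ _
        have hn2 : (a :: b :: l₂).Nodup := hsub.nodup hpn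
        have hab : a ≠ b := by
          intro h
          exact (List.nodup_cons.1 hn2).1 (h ▸ List.mem_cons_self (a := b) (l := l₂))
        have hedge : pstr (ofInt ω) p ≤ ofInt ω a b := by
          rw [hsplit]
          exact le_trans (pstr_append_le _ l₁ _ (by simp)) (pstr_le_head _ a b l₂)
        refine lt_min ?_ ?_
        · exact lt_of_lt_of_le (lt_of_lt_of_le hplt hedge)
            (by simp only [ofInt]; exact_mod_cast (hbound a b hab).2)
        · -- sq < Us t b
          have hbc : b ≠ c := by
            have hcmem : c ∈ l₁ ++ [a] := by
              have hh : p.head? = some c := hpp.2.1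
              rw [hform, List.head?_append_of_ne_nil _ (by simp)] at hh
              exact List.mem_of_mem_head? (Option.mem_def.mpr hh)
            have hdisj := (List.nodup_append.1 (hform ▸ hpn)).2.2
            intro hbc'
            exact hdisj c hcmem b (by simp) hbc'.symm
          have hsufn : (b :: l₂).Nodup := hn2.of_cons
          have hsufp : IsPath b x (b :: l₂) := by
            refine ⟨hsufn, rfl, ?_⟩
            rw [← getLast?_suffix (l₁ := l₁ ++ [a]) (by simp : (b :: l₂) ≠ []), ← hform]
            exact hpp.2.2
          have hsufge : pstr (ofInt ω) p ≤ pstr (ofInt ω) (b :: l₂) := by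
            rw [hform]; exact pstr_append_le _ (l₁ ++ [a]) _ (by simp)
          obtain ⟨r, hrn, hrp, hrge⟩ := splice (ofInt ω) (b :: l₂) q hsufn hsufp hqn hqp
          have hmin : min (pstr (ofInt ω) (b :: l₂)) sq = sq :=
            min_eq_right (le_of_lt (lt_of_lt_of_le hplt hsufge))
          have h2 : ((sq : WithTop ℤ) : WithBot (WithTop ℤ)) ≤ S (ofInt ω) b c := by
            refine le_trans ?_ (le_S _ hrn hrp)
            exact WithBot.coe_le_coe.2 (hmin ▸ hrge)
          have h3 := lt_of_le_of_lt h2 (iht b hbc)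
          exact WithBot.coe_lt_coe.1 h3
      · -- Rule 2
        rw [heq]
        have hyx : y ≠ x := fun h => absurd hylt (by simp [h])
        obtain ⟨r, hrn, hrp, hrge⟩ := splice (ofInt ω) [y, x] q (by simp [hyx])
          (path_pair hyx) hqn hqp
        rw [pstr_pair] at hrge
        have h2 : min (ofInt ω y x) sq < Us t y := by
          have h3 : ((min (ofInt ω y x) sq : WithTop ℤ) : WithBot (WithTop ℤ)) ≤ S (ofInt ω) y c :=
            le_trans (WithBot.coe_le_coe.2 hrge) (le_S _ hrn hrp)
          exact WithBot.coe_lt_coe.1 (lt_of_le_of_lt h3 (iht y hyc))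
        rcases le_total (ofInt ω y x) sq with hc1 | hc1
        · exfalso
          rw [min_eq_left hc1] at h2
          have h4 : Us t y ≤ ofInt ω y x :=
            le_trans hyle (by simp only [ofInt]; exact_mod_cast (hbound y x hyx).1)
          exact absurd h2 (not_lt.2 h4)
        · rw [min_eq_right hc1] at h2
          exact WithBot.coe_lt_coe.2 h2
  -- conclusion
  intro x hx
  have h1 := key N le_rfl x hx
  rw [hU]
  have h2 : ((((ωo x c - W : ℤ) : WithTop ℤ)) : WithBot (WithTop ℤ)) ≤ S (ofInt ω) x c := by
    refine le_trans ?_ (le_S (ofInt ω) (by simp [hx]) (path_pair hx))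
    rw [pstr_pair]
    exact WithBot.coe_le_coe.2 (by simp only [ofInt]; exact_mod_cast (hbound x c hx).1)
  have h3 := lt_of_le_of_lt h2 h1
  exact WithBot.coe_lt_coe.1 h3


end Schulze
end
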